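/- arXiv:2012.03412 — 2 statements merged into one kernel-verified Lean document; each statement's English description precedes it below -/
import Mathlib

section
/- Let p be a nonzero complex number, m \ge 1, and let a_1,...,a_m, q_1,...,q_m be complex numbers with \sum a_k = 0 and \sum a_k q_k \ne 0. Suppose F(t) = \sum_{n\ge 1} x_n t^n and \phi(t) = 1 + \sum_{n\ge 1} y_n t^n satisfy F(t/\phi(t)^p) = \sum_{k=1}^m a_k \phi(t)^{q_k}. Then for all n \ge 1, x_n = \sum_{k=1}^n (\sum_{i=1}^m (a_i q_i / (np+q_i)) binom(np+q_i, k)) B_{n,k}(y_1,...,y_{n-k+1}). -/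
open PowerSeries Finset
noncomputable section

/-- Coefficient-wise composition `f ∘ g` of formal power series; this agrees with the
usual composition when `g` has zero constant term. -/
def scomp (f g : PowerSeries ℂ) : PowerSeries ℂ :=
  PowerSeries.mk fun N => ∑ n ∈ Finset.range (N + 1),
    (PowerSeries.coeff n f) * (PowerSeries.coeff N (g ^ n))

/-- The exponential series `∑ t^n/n!`. -/
def expS : PowerSeries ℂ := PowerSeries.mk fun n => 1 / (n.factorial : ℂ)

/-- The series `log(1+t) = ∑_{n≥1} (-1)^{n+1} t^n / n`. -/
def logS : PowerSeries ℂ := PowerSeries.mk fun n => if n = 0 then 0 else (-1) ^ (n + 1) / (n : ℂ)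

/-- Complex power `φ^q := exp (q · log φ)`, well defined when `φ` has constant term 1. -/
def cpow (φ : PowerSeries ℂ) (q : ℂ) : PowerSeries ℂ :=
  scomp expS (q • scomp logS (φ - 1))

/-- Formal derivative. -/
def D (f : PowerSeries ℂ) : PowerSeries ℂ :=
  PowerSeries.mk fun n => ((n + 1 : ℕ) : ℂ) * PowerSeries.coeff (n + 1) f

/-- Generalized binomial coefficient `binom(t, k) = t(t-1)⋯(t-k+1)/k!`. -/
def gbinom (t : ℂ) (k : ℕ) : ℂ := (∏ j ∈ Finset.range k, (t - j)) / (k.factorial : ℂ)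

/-- The ordinary Bell polynomial `B_{n,k}(x_1, …, x_{n-k+1})`. -/
def ordBell (n k : ℕ) (x : ℕ → ℂ) : ℂ :=
  ∑ i : Fin (n - k + 1) → Fin (n + 1),
    if (∑ j, (i j : ℕ)) = k ∧ (∑ j, (j.1 + 1) * (i j : ℕ)) = n then
      ((k.factorial : ℂ) / ∏ j, ((i j : ℕ).factorial : ℂ)) * ∏ j, x (j.1 + 1) ^ (i j : ℕ)
    else 0

lemma coeff_scomp (f g : ℂ⟦X⟧) (N : ℕ) :
    coeff N (scomp f g) = ∑ n ∈ range (N + 1), coeff n f * coeff N (g ^ n) := by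
  rw [scomp, coeff_mk]

lemma coeff_pow_lt {g : ℂ⟦X⟧} (h0 : constantCoeff g = 0) {m j : ℕ} (h : m < j) :
    coeff m (g ^ j) = 0 :=
  X_pow_dvd_iff.mp (pow_dvd_pow_of_dvd (X_dvd_iff.mpr h0) j) m h

lemma coeff_aeval {g : ℂ⟦X⟧} (h0 : constantCoeff g = 0) (P : Polynomial ℂ) (N : ℕ) :
    coeff N (Polynomial.aeval g P) = ∑ n ∈ range (N + 1), P.coeff n * coeff N (g ^ n) := by
  have hdeg : P.natDegree < max (N + 1) (P.natDegree + 1) := by omega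
  rw [Polynomial.aeval_def, Polynomial.eval₂_eq_sum_range' _ hdeg, map_sum]
  rw [← sum_subset (range_subset_range.mpr (le_max_left _ _))]
  · apply sum_congr rfl
    intro n _
    rw [PowerSeries.algebraMap_apply, Algebra.algebraMap_self, RingHom.id_apply, coeff_C_mul]
  · intro n _ hn
    rw [mem_range, not_lt] at hn
    rw [PowerSeries.algebraMap_apply, Algebra.algebraMap_self, RingHom.id_apply, coeff_C_mul,
      coeff_pow_lt h0 (by omega), mul_zero]

lemma coeff_scomp_aeval {g : ℂ⟦X⟧} (h0 : constantCoeff g = 0) (f : ℂ⟦X⟧) {N M : ℕ}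
    (hNM : N < M) :
    coeff N (scomp f g) = coeff N (Polynomial.aeval g (trunc M f)) := by
  rw [coeff_scomp, coeff_aeval h0]
  apply sum_congr rfl
  intro n hn
  rw [mem_range] at hn
  rw [coeff_trunc, if_pos (by omega)]

lemma scomp_one (g : ℂ⟦X⟧) : scomp 1 g = 1 := by
  ext N
  rw [coeff_scomp]
  rw [Finset.sum_eq_single 0]
  · simp
  · intro n _ hn
    rw [coeff_one, if_neg hn, zero_mul]
  · simp

lemma scomp_add (f₁ f₂ g : ℂ⟦X⟧) : scomp (f₁ + f₂) g = scomp f₁ g + scomp f₂ g := by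
  ext N
  simp [coeff_scomp, add_mul, Finset.sum_add_distrib]

lemma scomp_mul {g : ℂ⟦X⟧} (h0 : constantCoeff g = 0) (f₁ f₂ : ℂ⟦X⟧) :
    scomp (f₁ * f₂) g = scomp f₁ g * scomp f₂ g := by
  ext N
  have key : coeff N (scomp (f₁ * f₂) g)
      = coeff N (Polynomial.aeval g (trunc (N + 1) f₁ * trunc (N + 1) f₂)) := by
    rw [coeff_scomp, coeff_aeval h0]
    apply sum_congr rfl
    intro n hn
    rw [mem_range] at hn
    congr 1
    rw [PowerSeries.coeff_mul, Polynomial.coeff_mul]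
    apply sum_congr rfl
    intro ij hij
    rw [Finset.HasAntidiagonal.mem_antidiagonal] at hij
    rw [coeff_trunc, coeff_trunc, if_pos (by omega), if_pos (by omega)]
  rw [key, map_mul, PowerSeries.coeff_mul, PowerSeries.coeff_mul]
  apply sum_congr rfl
  intro ij hij
  rw [Finset.HasAntidiagonal.mem_antidiagonal] at hij
  rw [coeff_scomp_aeval h0 f₁ (show ij.1 < N + 1 by omega),
    coeff_scomp_aeval h0 f₂ (show ij.2 < N + 1 by omega)]
lemma D_eq (f : ℂ⟦X⟧) : D f = derivativeFun f := by
  ext N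
  rw [D, coeff_mk, show derivativeFun f = derivative ℂ f from rfl, coeff_derivative, mul_comm]
  push_cast
  ring

lemma coeff_D (f : ℂ⟦X⟧) (N : ℕ) : coeff N (D f) = ((N : ℂ) + 1) * coeff (N + 1) f := by
  rw [D, coeff_mk]; push_cast; ring

lemma D_deriv (f : ℂ⟦X⟧) : D f = PowerSeries.derivative ℂ f := by
  rw [D_eq]; rfl

lemma D_mul (f g : ℂ⟦X⟧) : D (f * g) = f * D g + g * D f := by
  simp only [D_eq, derivativeFun_mul, smul_eq_mul]

lemma D_one : D (1 : ℂ⟦X⟧) = 0 := by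
  rw [D_eq, derivativeFun_one]

lemma D_chain {g : ℂ⟦X⟧} (h0 : constantCoeff g = 0) (f : ℂ⟦X⟧) :
    D (scomp f g) = scomp (D f) g * D g := by
  ext N
  have h1 : coeff N (D (scomp f g))
      = coeff N (D (Polynomial.aeval g (trunc (N + 2) f))) := by
    rw [coeff_D, coeff_D, coeff_scomp_aeval h0 f (show N + 1 < N + 2 by omega)]
  rw [h1, D_deriv, Derivation.map_aeval, smul_eq_mul, ← D_deriv]
  rw [PowerSeries.coeff_mul, PowerSeries.coeff_mul]
  apply sum_congr rfl
  intro ij hij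
  rw [Finset.HasAntidiagonal.mem_antidiagonal] at hij
  congr 1
  rw [coeff_scomp_aeval h0 (D f) (show ij.1 < N + 1 by omega)]
  congr 2
  rw [D_deriv, ← trunc_derivative]
lemma D_add (f g : ℂ⟦X⟧) : D (f + g) = D f + D g := by
  simp only [D_eq, derivativeFun_add]

lemma ode_unique {u v h : ℂ⟦X⟧} (hu : D u = h * u) (hv : D v = h * v)
    (h00 : coeff 0 u = coeff 0 v) : u = v := by
  ext N
  induction N using Nat.strong_induction_on with
  | _ N ih =>
    cases N with
    | zero => exact h00
    | succ N =>
      have e1 : coeff N (D u) = coeff N (D v) := by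
        rw [hu, hv, PowerSeries.coeff_mul, PowerSeries.coeff_mul]
        apply sum_congr rfl
        intro ij hij
        rw [Finset.HasAntidiagonal.mem_antidiagonal] at hij
        rw [ih ij.2 (by omega)]
      rw [coeff_D, coeff_D] at e1
      exact mul_left_cancel₀ (Nat.cast_add_one_ne_zero N) e1

lemma coeff_zero_scomp (f g : ℂ⟦X⟧) : coeff 0 (scomp f g) = coeff 0 f := by
  rw [coeff_scomp]
  simp

lemma coeff_zero_expS : coeff 0 expS = 1 := by
  rw [expS, coeff_mk]; simp

lemma D_expS : D expS = expS := by
  ext N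
  rw [coeff_D, expS, coeff_mk, coeff_mk]
  rw [Nat.factorial_succ]
  push_cast
  have h1 : (N.factorial : ℂ) ≠ 0 := Nat.cast_ne_zero.mpr N.factorial_ne_zero
  have h2 : (N : ℂ) + 1 ≠ 0 := Nat.cast_add_one_ne_zero N
  field_simp

lemma D_scomp_expS {g : ℂ⟦X⟧} (h0 : constantCoeff g = 0) :
    D (scomp expS g) = scomp expS g * D g := by
  rw [D_chain h0, D_expS]

lemma exp_add {A B : ℂ⟦X⟧} (hA : constantCoeff A = 0) (hB : constantCoeff B = 0) :
    scomp expS (A + B) = scomp expS A * scomp expS B := by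
  have hAB : constantCoeff (A + B) = 0 := by rw [map_add, hA, hB, add_zero]
  apply ode_unique (h := D A + D B)
  · rw [D_scomp_expS hAB, D_add]; ring
  · rw [D_mul, D_scomp_expS hA, D_scomp_expS hB]; ring
  · rw [coeff_zero_scomp]
    have : coeff 0 (scomp expS A * scomp expS B) = coeff 0 (scomp expS A) * coeff 0 (scomp expS B) := by
      rw [PowerSeries.coeff_mul]
      simp
    rw [this, coeff_zero_scomp, coeff_zero_scomp, coeff_zero_expS, mul_one]

lemma D_logS : D logS = PowerSeries.mk fun n => (-1 : ℂ) ^ n := by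
  ext N
  rw [coeff_D, logS, coeff_mk, coeff_mk, if_neg (Nat.succ_ne_zero N)]
  push_cast
  rw [pow_succ, pow_succ]
  have : (N : ℂ) + 1 ≠ 0 := Nat.cast_add_one_ne_zero N
  field_simp

lemma one_add_X_mul_D_logS : (1 + PowerSeries.X) * D logS = 1 := by
  rw [D_logS]
  ext N
  rw [add_mul, one_mul, map_add]
  cases N with
  | zero => simp [coeff_mk]
  | succ N =>
    rw [PowerSeries.coeff_succ_X_mul, coeff_mk, coeff_mk, PowerSeries.coeff_one,
      if_neg (Nat.succ_ne_zero N), pow_succ]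
    ring
lemma scomp_X {g : ℂ⟦X⟧} (h0 : constantCoeff g = 0) : scomp X g = g := by
  ext N
  rw [coeff_scomp]
  cases N with
  | zero =>
    rw [coeff_zero_eq_constantCoeff_apply, h0]
    simp [PowerSeries.coeff_X]
  | succ N =>
    rw [Finset.sum_eq_single 1]
    · rw [PowerSeries.coeff_X, if_pos rfl, one_mul, pow_one]
    · intro n _ hn
      rw [PowerSeries.coeff_X, if_neg hn, zero_mul]
    · intro h
      exact absurd (mem_range.mpr (by omega)) h

lemma phi_scomp_DlogS {ψ : ℂ⟦X⟧} (h0 : constantCoeff ψ = 0) :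
    (1 + ψ) * scomp (D logS) ψ = 1 := by
  have h := congrArg (fun f => scomp f ψ) one_add_X_mul_D_logS
  simpa only [scomp_mul h0, scomp_add, scomp_one, scomp_X h0] using h

lemma constCoeff_scomp_logS {ψ : ℂ⟦X⟧} : constantCoeff (scomp logS ψ) = 0 := by
  rw [← coeff_zero_eq_constantCoeff_apply, coeff_zero_scomp, logS, coeff_mk, if_pos rfl]

lemma exp_log {ψ : ℂ⟦X⟧} (h0 : constantCoeff ψ = 0) :
    scomp expS (scomp logS ψ) = 1 + ψ := by
  apply ode_unique (h := scomp (D logS) ψ * D ψ)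
  · rw [D_scomp_expS constCoeff_scomp_logS, D_chain h0]; ring
  · rw [D_add, D_one, zero_add]
    calc D ψ = ((1 + ψ) * scomp (D logS) ψ) * D ψ := by rw [phi_scomp_DlogS h0, one_mul]
    _ = scomp (D logS) ψ * D ψ * (1 + ψ) := by ring
  · rw [coeff_zero_scomp, coeff_zero_expS]
    simp [coeff_zero_eq_constantCoeff_apply, h0]

lemma D_smul (r : ℂ) (f : ℂ⟦X⟧) : D (r • f) = r • D f := by
  simp only [D_eq, derivativeFun_smul]

section cpow
variable {φ : PowerSeries ℂ} (hφ : constantCoeff φ = 1)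
include hφ

lemma hψ0 : constantCoeff (φ - 1) = 0 := by
  rw [map_sub, hφ, map_one, sub_self]

omit hφ in
lemma hL0 (r : ℂ) : constantCoeff (r • scomp logS (φ - 1)) = 0 := by
  rw [smul_eq_C_mul, map_mul, constCoeff_scomp_logS, mul_zero]

omit hφ in
lemma constCoeff_cpow (r : ℂ) : constantCoeff (cpow φ r) = 1 := by
  rw [cpow, ← coeff_zero_eq_constantCoeff_apply, coeff_zero_scomp, coeff_zero_expS]

omit hφ in
lemma cpow_add (r s : ℂ) : cpow φ r * cpow φ s = cpow φ (r + s) := by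
  rw [cpow, cpow, cpow, add_smul, exp_add (hL0 (φ := φ) r) (hL0 (φ := φ) s)]

omit hφ in
lemma cpow_zero : cpow φ 0 = 1 := by
  rw [cpow, zero_smul]
  ext N
  rw [coeff_scomp, Finset.sum_eq_single 0]
  · rw [pow_zero, coeff_zero_expS, one_mul]
  · intro n _ hn
    rw [zero_pow hn, map_zero, mul_zero]
  · simp

lemma cpow_one : cpow φ 1 = φ := by
  rw [cpow, one_smul, exp_log (hψ0 hφ)]
  ring

omit hφ in
lemma cpow_inv_eq (r : ℂ) : (cpow φ r)⁻¹ = cpow φ (-r) := by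
  rw [PowerSeries.inv_eq_iff_mul_eq_one (by rw [constCoeff_cpow (φ := φ)]; exact one_ne_zero)]
  rw [cpow_add, neg_add_cancel, cpow_zero]

omit hφ in
lemma cpow_pow (r : ℂ) (j : ℕ) : (cpow φ r) ^ j = cpow φ (j * r) := by
  induction j with
  | zero => rw [pow_zero, Nat.cast_zero, zero_mul, cpow_zero]
  | succ j ih =>
    rw [pow_succ, ih, cpow_add]
    norm_num
    ring_nf

lemma D_cpow (r : ℂ) : φ * D (cpow φ r) = r • (D φ * cpow φ r) := by
  have hDφ : D (φ - 1) = D φ := by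
    have h2 := D_add (φ - 1) 1
    rw [D_one, add_zero, sub_add_cancel] at h2
    exact h2.symm
  rw [cpow, D_scomp_expS (hL0 (φ := φ) r), D_smul, D_chain (hψ0 hφ), hDφ, ← cpow]
  rw [smul_eq_C_mul, smul_eq_C_mul]
  calc φ * (cpow φ r * (C r * (scomp (D logS) (φ - 1) * D φ)))
      = C r * (((1 + (φ - 1)) * scomp (D logS) (φ - 1)) * (D φ * cpow φ r)) := by ring
    _ = C r * (D φ * cpow φ r) := by rw [phi_scomp_DlogS (hψ0 hφ), one_mul]

end cpow
lemma D_X : D (X : ℂ⟦X⟧) = 1 := by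
  ext N
  rw [coeff_D]
  cases N with
  | zero => simp [PowerSeries.coeff_X]
  | succ N =>
    rw [PowerSeries.coeff_X, if_neg (by omega), PowerSeries.coeff_one, if_neg (by omega)]
    ring

lemma D_pow (f : ℂ⟦X⟧) (j : ℕ) : D (f ^ (j + 1)) = ((j:ℂ) + 1) • (f ^ j * D f) := by
  induction j with
  | zero => simp [D_eq]
  | succ j ih =>
    have h1 : f * (f ^ j * D f) = f ^ (j + 1) * D f := by rw [pow_succ]; ring
    rw [pow_succ, D_mul, ih, mul_smul_comm, h1, smul_eq_C_mul, smul_eq_C_mul,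
      show ((j+1:ℕ):ℂ) + 1 = ((j:ℂ) + 1) + 1 by push_cast; ring,
      map_add C ((j:ℂ)+1) 1, map_one]
    ring

lemma D_X_pow (j : ℕ) : D ((X : ℂ⟦X⟧) ^ (j + 1)) = ((j:ℂ) + 1) • (X:ℂ⟦X⟧) ^ j := by
  rw [D_pow, D_X, mul_one]

section key
variable {φ : PowerSeries ℂ} (hφ : constantCoeff φ = 1)
include hφ

lemma phi_ne_zero : φ ≠ 0 := by
  intro h
  rw [h, map_zero] at hφ
  exact one_ne_zero hφ.symm

lemma keyK (p : ℂ) (M j : ℕ) (hj : 1 ≤ j) :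
    coeff M (D ((PowerSeries.X * cpow φ (-p)) ^ j) * cpow φ (((M:ℂ) + 1) * p))
      = if j = M + 1 then ((M:ℂ) + 1) else 0 := by
  set v := cpow φ (((M:ℂ) + 1) * p) with hv
  have hwj : ∀ j : ℕ, (PowerSeries.X * cpow φ (-p)) ^ j
      = PowerSeries.X ^ j * cpow φ (-((j:ℂ) * p)) := by
    intro j
    rw [mul_pow, cpow_pow (φ := φ), mul_neg]
  obtain ⟨i, rfl⟩ : ∃ i, j = i + 1 := ⟨j - 1, by omega⟩
  set cj := cpow φ (-(((i:ℕ) + 1 : ℂ) * p)) with hcj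
  have hDw : D ((PowerSeries.X * cpow φ (-p)) ^ (i + 1))
      = PowerSeries.X ^ (i + 1) * D cj + ((i:ℂ) + 1) • (PowerSeries.X ^ i * cj) := by
    rw [hwj, D_mul, D_X_pow, hcj]
    push_cast
    rw [smul_eq_C_mul, smul_eq_C_mul]
    ring
  rcases lt_trichotomy (i + 1) (M + 1) with hlt | heq | hgt
  · -- j < M + 1 : coefficient vanishes
    rw [if_neg (by omega)]
    obtain ⟨e, he⟩ : ∃ e, M - i = e + 1 := ⟨M - i - 1, by omega⟩
    have hdc : ((M:ℂ)) - (i:ℂ) = (e:ℂ) + 1 := by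
      have : (M:ℂ) = ((i + (e+1) :ℕ) : ℂ) := by norm_cast; omega
      rw [this]; push_cast; ring
    have hcast : -(((i:ℕ) + 1 : ℂ) * p) + ((M:ℂ) + 1) * p = ((e:ℂ) + 1) * p := by
      rw [← hdc]; ring
    have hdne : ((e:ℂ) + 1) ≠ 0 := Nat.cast_add_one_ne_zero e
    have hcv : cj * v = cpow φ (((e:ℂ) + 1) * p) := by
      rw [hcj, hv, cpow_add, hcast]
    set cpd := cpow φ (((e:ℂ) + 1) * p) with hcpd
    set B : ℂ⟦X⟧ := C ((i:ℂ) + 1) * (PowerSeries.X ^ i * cpd)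
      - C (((i:ℂ) + 1)/((e:ℂ) + 1)) * (PowerSeries.X ^ (i+1) * D cpd) with hB
    have e1 : φ * D cj = -(C (((i:ℂ) + 1) * p)) * (D φ * cj) := by
      rw [hcj, D_cpow hφ, smul_eq_C_mul, map_neg]
    have e2 : φ * D cpd = C (((e:ℂ) + 1) * p) * (D φ * cpd) := by
      rw [hcpd, D_cpow hφ, smul_eq_C_mul]
    have e3 : C (((i:ℂ) + 1)/((e:ℂ) + 1)) * C (((e:ℂ) + 1) * p) = C (((i:ℂ) + 1) * p) := by
      rw [← map_mul]
      congr 1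
      field_simp
    have hAB : D ((PowerSeries.X * cpow φ (-p)) ^ (i + 1)) * v = B := by
      apply mul_left_cancel₀ (phi_ne_zero hφ)
      rw [hDw, hB, smul_eq_C_mul]
      linear_combination (PowerSeries.X ^ (i+1) * v) * e1
        + (C (((i:ℂ) + 1)/((e:ℂ) + 1)) * PowerSeries.X ^ (i+1)) * e2
        + (C ((i:ℂ) + 1) * PowerSeries.X ^ i * φ
            - C (((i:ℂ) + 1) * p) * PowerSeries.X ^ (i+1) * D φ) * hcv
        + (PowerSeries.X ^ (i+1) * D φ * cpd) * e3
    rw [hAB, hB, map_sub, coeff_C_mul, coeff_C_mul,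
      PowerSeries.coeff_X_pow_mul' (n := i), if_pos (by omega),
      PowerSeries.coeff_X_pow_mul' (n := i + 1), if_pos (by omega),
      show M - i = e + 1 from he, show M - (i + 1) = e by omega, coeff_D]
    field_simp
    ring
  · rw [if_pos (by omega)]
    have hMi : i = M := by omega
    subst hMi
    have hcv : cj * v = 1 := by
      rw [hcj, hv, cpow_add]
      rw [show -(((i:ℕ) + 1 : ℂ) * p) + ((i:ℂ) + 1) * p = 0 by push_cast; ring, cpow_zero]
    rw [hDw, add_mul, smul_mul_assoc, mul_assoc, mul_assoc, hcv, mul_one, map_add, map_smul,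
      PowerSeries.coeff_X_pow_mul', if_neg (by omega), PowerSeries.coeff_X_pow, if_pos rfl,
      zero_add, smul_eq_mul, mul_one]
  · rw [if_neg (by omega)]
    rw [hDw, add_mul, map_add]
    rw [mul_assoc, PowerSeries.coeff_X_pow_mul', if_neg (by omega)]
    rw [smul_mul_assoc, mul_assoc, map_smul, PowerSeries.coeff_X_pow_mul', if_neg (by omega),
      smul_zero, add_zero]

end key
lemma D_sum {s : Finset ℕ} (f : ℕ → ℂ⟦X⟧) : D (∑ i ∈ s, f i) = ∑ i ∈ s, D (f i) := by
  classical
  induction s using Finset.induction_on with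
  | empty => simp [D_eq, derivativeFun]
  | insert _ _ h ih => rw [Finset.sum_insert h, Finset.sum_insert h, D_add, ih]

section main
variable {φ : PowerSeries ℂ} (hφ : constantCoeff φ = 1)
include hφ

lemma extract (p : ℂ) (F : ℂ⟦X⟧) (M : ℕ) :
    coeff M (D (scomp F (PowerSeries.X * cpow φ (-p))) * cpow φ (((M:ℂ) + 1) * p))
      = ((M:ℂ) + 1) * coeff (M+1) F := by
  set w := PowerSeries.X * cpow φ (-p) with hw
  have h0w : constantCoeff w = 0 := by
    rw [hw, map_mul, constantCoeff_X, zero_mul]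
  set v := cpow φ (((M:ℂ) + 1) * p) with hv
  have step1 : ∀ i ≤ M, coeff i (D (scomp F w))
      = ∑ n ∈ range (M + 2), coeff n F * coeff i (D (w ^ n)) := by
    intro i hi
    rw [coeff_D, coeff_scomp, Finset.mul_sum]
    rw [← sum_subset (range_subset_range.mpr (by omega) : range (i + 2) ⊆ range (M + 2))]
    · apply sum_congr rfl
      intro n _
      rw [coeff_D]
      ring
    · intro n hn hn2
      rw [mem_range, not_lt] at hn2
      rw [coeff_D, coeff_pow_lt h0w (by omega), mul_zero, mul_zero]
  have step2 : coeff M (D (scomp F w) * v)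
      = ∑ n ∈ range (M + 2), coeff n F * coeff M (D (w ^ n) * v) := by
    rw [PowerSeries.coeff_mul]
    have : ∀ il ∈ antidiagonal M, coeff il.1 (D (scomp F w)) * coeff il.2 v
        = ∑ n ∈ range (M + 2), coeff n F * (coeff il.1 (D (w ^ n)) * coeff il.2 v) := by
      intro il hil
      rw [Finset.HasAntidiagonal.mem_antidiagonal] at hil
      rw [step1 il.1 (by omega), Finset.sum_mul]
      apply sum_congr rfl
      intro n _
      ring
    rw [sum_congr rfl this, Finset.sum_comm]
    apply sum_congr rfl
    intro n _
    rw [PowerSeries.coeff_mul, Finset.mul_sum]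
  rw [step2, Finset.sum_eq_single (M + 1)]
  · rw [keyK hφ p M (M+1) (by omega), if_pos rfl]
    ring
  · intro n _ hn
    cases n with
    | zero =>
      rw [pow_zero, D_one, zero_mul, map_zero, mul_zero]
    | succ n =>
      rw [keyK hφ p M (n+1) (by omega), if_neg hn, mul_zero]
  · intro h
    exact absurd (mem_range.mpr (by omega)) h

lemma cpow_D_mul {r u : ℂ} (hru : r + u ≠ 0) :
    D (cpow φ r) * cpow φ u = C (r / (r + u)) * D (cpow φ (r + u)) := by
  apply mul_left_cancel₀ (phi_ne_zero hφ)
  have e1 : φ * D (cpow φ r) = C r * (D φ * cpow φ r) := by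
    rw [D_cpow hφ, smul_eq_C_mul]
  have e2 : φ * D (cpow φ (r + u)) = C (r + u) * (D φ * cpow φ (r + u)) := by
    rw [D_cpow hφ, smul_eq_C_mul]
  have e3 : cpow φ r * cpow φ u = cpow φ (r + u) := cpow_add r u
  have e4 : C (r / (r + u)) * C (r + u) = C r := by
    rw [← map_mul]
    congr 1
    field_simp
  linear_combination (cpow φ u) * e1 - C (r / (r + u)) * e2 + (C r * D φ) * e3
    - (D φ * cpow φ (r + u)) * e4

lemma perterm (p : ℂ) {u : ℂ} (M : ℕ) (hru : u + ((M:ℂ) + 1) * p ≠ 0) :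
    coeff M (D (cpow φ u) * cpow φ (((M:ℂ) + 1) * p))
      = u / (u + ((M:ℂ) + 1) * p) * (((M:ℂ) + 1) * coeff (M+1) (cpow φ (u + ((M:ℂ) + 1) * p))) := by
  rw [cpow_D_mul hφ hru, coeff_C_mul, coeff_D]

end main
lemma prod_cast_desc (s k : ℕ) (h : k ≤ s) :
    ∏ j ∈ range k, ((s:ℂ) - (j:ℂ)) = (s.descFactorial k : ℂ) := by
  induction k with
  | zero => simp
  | succ k ih =>
    rw [prod_range_succ, ih (by omega), Nat.descFactorial_succ]
    rw [Nat.cast_mul, Nat.cast_sub (by omega)]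
    ring

lemma gbinom_natCast (s k : ℕ) : gbinom ((s:ℕ):ℂ) k = (s.choose k : ℂ) := by
  rcases le_or_gt k s with h | h
  · rw [gbinom, prod_cast_desc s k h, Nat.descFactorial_eq_factorial_mul_choose, Nat.cast_mul,
      mul_comm, mul_div_assoc, div_self (Nat.cast_ne_zero.mpr k.factorial_ne_zero), mul_one]
  · rw [gbinom, Finset.prod_eq_zero (mem_range.mpr h) (by rw [sub_self]), zero_div,
      Nat.choose_eq_zero_of_lt h, Nat.cast_zero]

section cp
variable {φ : PowerSeries ℂ} (hφ : constantCoeff φ = 1)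
include hφ

lemma coeff_cpow_nat (s : ℕ) (N : ℕ) :
    coeff N (cpow φ ((s:ℕ):ℂ))
      = ∑ k ∈ range (N + 1), gbinom ((s:ℕ):ℂ) k * coeff N ((φ - 1) ^ k) := by
  have h1 : cpow φ ((s:ℕ):ℂ) = φ ^ s := by
    rw [show ((s:ℕ):ℂ) = (s:ℂ) * 1 by ring, ← cpow_pow (φ := φ), cpow_one hφ]
  have h2 : φ ^ s = ∑ k ∈ range (s + 1), (φ - 1) ^ k * (s.choose k : ℂ⟦X⟧) := by
    have := add_pow (φ - 1) 1 s
    simp only [one_pow, mul_one] at this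
    rw [show φ = (φ - 1) + 1 by ring, this]
    apply sum_congr rfl
    intro k _
    push_cast
    ring
  rw [h1, h2, map_sum]
  have hψ : constantCoeff (φ - 1) = 0 := hψ0 hφ
  have common : ∀ T : ℕ, s + 1 ≤ T → N + 1 ≤ T →
      (∑ k ∈ range (s+1), coeff N ((φ - 1) ^ k * (s.choose k : ℂ⟦X⟧)))
        = ∑ k ∈ range (N+1), gbinom ((s:ℕ):ℂ) k * coeff N ((φ - 1) ^ k) := by
    intro T hsT hNT
    have eL := sum_subset (f := fun k => coeff N ((φ - 1) ^ k * ((s.choose k : ℕ) : ℂ⟦X⟧)))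
      (range_subset_range.mpr hsT) (fun k _ hk2 => by
        rw [mem_range, not_lt] at hk2
        show coeff N ((φ - 1) ^ k * ((s.choose k : ℕ) : ℂ⟦X⟧)) = 0
        rw [Nat.choose_eq_zero_of_lt (by omega)]
        simp)
    have eR := sum_subset (f := fun k => gbinom ((s:ℕ):ℂ) k * coeff N ((φ - 1) ^ k))
      (range_subset_range.mpr hNT) (fun k _ hk2 => by
        rw [mem_range, not_lt] at hk2
        show gbinom ((s:ℕ):ℂ) k * coeff N ((φ - 1) ^ k) = 0
        rw [coeff_pow_lt hψ (by omega), mul_zero])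
    rw [eL, eR]
    apply sum_congr rfl
    intro k _
    rw [← map_natCast C (s.choose k), mul_comm ((φ-1)^k), coeff_C_mul, gbinom_natCast]
  exact common (s + N + 1) (by omega) (by omega)

lemma coeff_cpow (r : ℂ) (N : ℕ) :
    coeff N (cpow φ r)
      = ∑ k ∈ range (N + 1), gbinom r k * coeff N ((φ - 1) ^ k) := by
  set L := scomp logS (φ - 1) with hL
  have hcoeff : ∀ t : ℂ, coeff N (cpow φ t)
      = ∑ n ∈ range (N + 1), (coeff n expS * coeff N (L ^ n)) * t ^ n := by
    intro t
    rw [cpow, coeff_scomp]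
    apply sum_congr rfl
    intro n _
    rw [smul_pow, map_smul, smul_eq_mul]
    ring
  set P : Polynomial ℂ := ∑ n ∈ range (N + 1),
    Polynomial.C (coeff n expS * coeff N (L ^ n)) * Polynomial.X ^ n with hP
  set Q : Polynomial ℂ := ∑ k ∈ range (N + 1),
    Polynomial.C (coeff N ((φ - 1) ^ k) / (k.factorial : ℂ))
      * ∏ j ∈ range k, (Polynomial.X - Polynomial.C (j:ℂ)) with hQ
  have hPeval : ∀ t : ℂ, P.eval t = coeff N (cpow φ t) := by
    intro t
    rw [hP, Polynomial.eval_finset_sum, hcoeff t]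
    apply sum_congr rfl
    intro n _
    simp [Polynomial.eval_mul, Polynomial.eval_pow]
  have hQeval : ∀ t : ℂ, Q.eval t
      = ∑ k ∈ range (N + 1), gbinom t k * coeff N ((φ - 1) ^ k) := by
    intro t
    rw [hQ, Polynomial.eval_finset_sum]
    apply sum_congr rfl
    intro k _
    rw [Polynomial.eval_mul, Polynomial.eval_C, Polynomial.eval_prod, gbinom]
    simp only [Polynomial.eval_sub, Polynomial.eval_X, Polynomial.eval_C]
    ring
  have hPQ : P = Q := by
    have hroot : ∀ s : ℕ, (P - Q).IsRoot ((s:ℕ):ℂ) := by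
      intro s
      rw [Polynomial.IsRoot, Polynomial.eval_sub, hPeval, hQeval, coeff_cpow_nat hφ, sub_self]
    have hinf : { x : ℂ | (P - Q).IsRoot x }.Infinite :=
      Set.infinite_of_injective_forall_mem (f := fun s : ℕ => ((s:ℕ):ℂ))
        Nat.cast_injective hroot
    exact sub_eq_zero.mp (Polynomial.eq_zero_of_infinite_isRoot _ hinf)
  rw [← hPeval r, ← hQeval r, hPQ]

end cp
lemma coeff_mul_pow_lt {f g : ℂ⟦X⟧} (hf : constantCoeff f = 0) (hg : constantCoeff g = 0)
    {m i j : ℕ} (h : m < i + j) : coeff m (f ^ i * g ^ j) = 0 := by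
  have hd : (X:ℂ⟦X⟧)^(i+j) ∣ f^i * g^j := by
    rw [pow_add]
    exact mul_dvd_mul (pow_dvd_pow_of_dvd (X_dvd_iff.mpr hf) i)
      (pow_dvd_pow_of_dvd (X_dvd_iff.mpr hg) j)
  exact X_pow_dvd_iff.mp hd m h

lemma Icc_prod_eq {M : Type*} [CommMonoid M] (J : ℕ) (g : ℕ → M) :
    ∏ n ∈ Icc 1 J, g n = ∏ j ∈ range J, g (j + 1) := by
  induction J with
  | zero => simp
  | succ J ih => rw [Finset.prod_Icc_succ_top (by omega), ih, prod_range_succ]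

lemma Icc_sum_eq {M : Type*} [AddCommMonoid M] (J : ℕ) (g : ℕ → M) :
    ∑ n ∈ Icc 1 J, g n = ∑ j ∈ range J, g (j + 1) := by
  induction J with
  | zero => simp
  | succ J ih => rw [Finset.sum_Icc_succ_top (by omega), ih, sum_range_succ]

lemma coeff_pow_ordBell (y : ℕ → ℂ) (N K : ℕ) (hK1 : 1 ≤ K) (hKN : K ≤ N) :
    coeff N ((PowerSeries.mk fun n => if n = 0 then (0:ℂ) else y n) ^ K) = ordBell N K y := by
  set ψ : ℂ⟦X⟧ := PowerSeries.mk fun n => if n = 0 then (0:ℂ) else y n with hψdef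
  set S : ℂ⟦X⟧ := ∑ j ∈ Icc 1 (N - K + 1), C (y j) * X ^ j with hS
  have hψ0 : constantCoeff ψ = 0 := by
    rw [hψdef, ← coeff_zero_eq_constantCoeff_apply, coeff_mk, if_pos rfl]
  have hcS : ∀ b, coeff b S = if b ∈ Icc 1 (N - K + 1) then y b else 0 := by
    intro b
    rw [hS, map_sum]
    have hterm : ∀ j ∈ Icc 1 (N - K + 1),
        coeff b (C (y j) * X ^ j) = if j = b then y j else 0 := by
      intro j _
      rw [coeff_C_mul, PowerSeries.coeff_X_pow]
      by_cases h : j = b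
      · rw [if_pos h, if_pos h.symm, mul_one]
      · rw [if_neg h, if_neg (fun hh => h hh.symm), mul_zero]
    rw [sum_congr rfl hterm, Finset.sum_ite_eq' (Icc 1 (N - K + 1)) b y]
  have hS0 : constantCoeff S = 0 := by
    rw [← coeff_zero_eq_constantCoeff_apply, hcS 0, if_neg (by simp)]
  have hA1 : coeff N (ψ ^ K) = coeff N (S ^ K) := by
    have hgeom := geom_sum₂_mul ψ S K
    have hz : coeff N ((∑ i ∈ range K, ψ ^ i * S ^ (K - 1 - i)) * (ψ - S)) = 0 := by
      rw [PowerSeries.coeff_mul]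
      apply Finset.sum_eq_zero
      intro ab hab
      rw [Finset.HasAntidiagonal.mem_antidiagonal] at hab
      rcases le_or_gt ab.2 (N - K + 1) with h2 | h2
      · have : coeff ab.2 (ψ - S) = 0 := by
          rw [map_sub, hcS]
          rcases Nat.eq_zero_or_pos ab.2 with h0 | h0
          · rw [h0, hψdef, coeff_mk, if_pos rfl, if_neg (by simp), sub_zero]
          · rw [hψdef, coeff_mk, if_neg (by omega), if_pos (by rw [mem_Icc]; omega), sub_self]
        rw [this, mul_zero]
      · have : coeff ab.1 (∑ i ∈ range K, ψ ^ i * S ^ (K - 1 - i)) = 0 := by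
          rw [map_sum]
          apply Finset.sum_eq_zero
          intro i hi
          rw [mem_range] at hi
          exact coeff_mul_pow_lt hψ0 hS0 (by omega)
        rw [this, zero_mul]
    rw [hgeom, map_sub] at hz
    exact sub_eq_zero.mp hz
  have hA2 : coeff N (S ^ K) = ∑ c ∈ piAntidiag (Icc 1 (N - K + 1)) K,
      if (∑ j ∈ Icc 1 (N - K + 1), j * c j) = N then
        (Nat.multinomial (Icc 1 (N - K + 1)) c : ℂ) * ∏ j ∈ Icc 1 (N - K + 1), y j ^ c j
      else 0 := by
    rw [hS, Finset.sum_pow_eq_sum_piAntidiag, map_sum]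
    apply sum_congr rfl
    intro c hc
    have hterm : (Nat.multinomial (Icc 1 (N - K + 1)) c : ℂ⟦X⟧)
        * ∏ j ∈ Icc 1 (N - K + 1), (C (y j) * X ^ j) ^ c j
        = C ((Nat.multinomial (Icc 1 (N - K + 1)) c : ℂ) * ∏ j ∈ Icc 1 (N - K + 1), y j ^ c j)
          * X ^ (∑ j ∈ Icc 1 (N - K + 1), j * c j) := by
      have h1 : ∀ j ∈ Icc 1 (N - K + 1), (C (y j) * X ^ j) ^ c j
          = C (y j ^ c j) * X ^ (j * c j) := by
        intro j _
        rw [mul_pow, ← pow_mul, map_pow]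
      rw [prod_congr rfl h1, Finset.prod_mul_distrib, ← map_prod, Finset.prod_pow_eq_pow_sum]
      rw [← map_natCast C (Nat.multinomial (Icc 1 (N - K + 1)) c), ← mul_assoc, ← map_mul]
    rw [hterm, coeff_C_mul, PowerSeries.coeff_X_pow]
    by_cases he : (∑ j ∈ Icc 1 (N - K + 1), j * c j) = N
    · rw [if_pos he, if_pos he.symm, mul_one]
    · rw [if_neg he, if_neg (fun hh => he hh.symm), mul_zero]
  rw [hA1, hA2, ← Finset.sum_filter, ordBell, ← Finset.sum_filter]
  have hJpos : 1 ≤ N - K + 1 := by omega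
  set toF : (ℕ → ℕ) → (Fin (N - K + 1) → Fin (N + 1)) :=
    fun c j => (⟨min (c (j.1 + 1)) N, by omega⟩ : Fin (N + 1)) with htoF
  set froF : (Fin (N - K + 1) → Fin (N + 1)) → ℕ → ℕ :=
    fun i n => if h : 1 ≤ n ∧ n ≤ N - K + 1 then (i (⟨n - 1, by omega⟩ : Fin (N - K + 1)) : ℕ)
      else 0 with hfroF
  have hfro1 : ∀ (i : Fin (N - K + 1) → Fin (N + 1)) (j : Fin (N - K + 1)),
      froF i (j.1 + 1) = (i j : ℕ) := by
    intro i j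
    simp only [hfroF]
    rw [dif_pos ⟨by omega, by omega⟩]
    congr 1
  have hIccFin : ∀ (g : ℕ → ℕ → ℂ) (i : Fin (N - K + 1) → Fin (N + 1)),
      (∏ n ∈ Icc 1 (N - K + 1), g n (froF i n)) = ∏ j : Fin (N - K + 1), g (j.1 + 1) (i j : ℕ) := by
    intro g i
    rw [Icc_prod_eq, ← Fin.prod_univ_eq_prod_range (fun j => g (j + 1) (froF i (j + 1)))]
    exact Fintype.prod_congr _ _ (fun j => by rw [hfro1 i j])
  have hIccFinN : ∀ (g : ℕ → ℕ → ℕ) (i : Fin (N - K + 1) → Fin (N + 1)),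
      (∑ n ∈ Icc 1 (N - K + 1), g n (froF i n)) = ∑ j : Fin (N - K + 1), g (j.1 + 1) (i j : ℕ) := by
    intro g i
    rw [Icc_sum_eq, ← Fin.sum_univ_eq_sum_range (fun j => g (j + 1) (froF i (j + 1)))]
    exact Fintype.sum_congr _ _ (fun j => by rw [hfro1 i j])
  apply Finset.sum_nbij' (i := toF) (j := froF)
  · -- toF maps into the filtered univ
    intro c hc
    rw [Finset.mem_filter] at hc ⊢
    obtain ⟨hc1, hc2⟩ := hc
    rw [mem_piAntidiag] at hc1
    obtain ⟨hcsum, hcsupp⟩ := hc1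
    have hbound : ∀ n ∈ Icc 1 (N - K + 1), c n ≤ K := fun n hn =>
      hcsum ▸ Finset.single_le_sum (f := c) (fun _ _ => Nat.zero_le _) hn
    have hval : ∀ j : Fin (N - K + 1), (toF c j : ℕ) = c (j.1 + 1) := by
      intro j
      simp only [htoF]
      have := hbound (j.1 + 1) (by rw [mem_Icc]; omega)
      omega
    refine ⟨Finset.mem_univ _, ?_, ?_⟩
    · rw [Fintype.sum_congr _ _ hval, Fin.sum_univ_eq_sum_range (fun j => c (j + 1)),
        ← Icc_sum_eq]
      exact hcsum
    · rw [show (∑ j : Fin (N - K + 1), (j.1 + 1) * (toF c j : ℕ))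
          = ∑ j : Fin (N - K + 1), (j.1 + 1) * c (j.1 + 1) from
        Fintype.sum_congr _ _ (fun j => by rw [hval j]),
        Fin.sum_univ_eq_sum_range (fun j => (j + 1) * c (j + 1)),
        ← Icc_sum_eq (N - K + 1) (fun n => n * c n)]
      exact hc2
  · -- froF maps into the filtered piAntidiag
    intro i hi
    rw [Finset.mem_filter] at hi ⊢
    obtain ⟨-, hi1, hi2⟩ := hi
    refine ⟨?_, ?_⟩
    · rw [mem_piAntidiag]
      refine ⟨?_, ?_⟩
      · rw [hIccFinN (fun _ v => v) i]
        exact hi1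
      · intro n hn
        by_cases h : 1 ≤ n ∧ n ≤ N - K + 1
        · rw [mem_Icc]; omega
        · simp only [hfroF] at hn
          rw [dif_neg h] at hn
          exact absurd rfl hn
    · rw [hIccFinN (fun n v => n * v) i]
      exact hi2
  · -- left inverse
    intro c hc
    rw [Finset.mem_filter, mem_piAntidiag] at hc
    obtain ⟨⟨hcsum, hcsupp⟩, -⟩ := hc
    have hbound : ∀ n ∈ Icc 1 (N - K + 1), c n ≤ K := fun n hn =>
      hcsum ▸ Finset.single_le_sum (f := c) (fun _ _ => Nat.zero_le _) hn
    have hval : ∀ j : Fin (N - K + 1), (toF c j : ℕ) = c (j.1 + 1) := by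
      intro j
      simp only [htoF]
      have := hbound (j.1 + 1) (by rw [mem_Icc]; omega)
      omega
    funext n
    simp only [hfroF]
    by_cases h : 1 ≤ n ∧ n ≤ N - K + 1
    · rw [dif_pos h]; show min (c (n - 1 + 1)) N = c n; rw [show n - 1 + 1 = n by omega]
      have := hbound n (by rw [mem_Icc]; omega)
      omega
    · rw [dif_neg h]
      by_contra hne
      have := hcsupp n (fun hh => hne hh.symm)
      rw [mem_Icc] at this
      exact h this
  · -- right inverse
    intro i hi
    funext j
    apply Fin.ext
    show min (froF i (j.1 + 1)) N = (i j : ℕ)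
    rw [hfro1 i j]
    have := (i j).isLt
    omega
  · -- values agree
    intro c hc
    rw [Finset.mem_filter, mem_piAntidiag] at hc
    obtain ⟨⟨hcsum, hcsupp⟩, -⟩ := hc
    have hbound : ∀ n ∈ Icc 1 (N - K + 1), c n ≤ K := fun n hn =>
      hcsum ▸ Finset.single_le_sum (f := c) (fun _ _ => Nat.zero_le _) hn
    have hval : ∀ j : Fin (N - K + 1), (toF c j : ℕ) = c (j.1 + 1) := by
      intro j
      simp only [htoF]
      have := hbound (j.1 + 1) (by rw [mem_Icc]; omega)
      omega
    have hfac : (∏ j : Fin (N - K + 1), ((toF c j : ℕ).factorial : ℂ))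
        = ∏ n ∈ Icc 1 (N - K + 1), ((c n).factorial : ℂ) := by
      rw [Fintype.prod_congr _ _ (fun j => by rw [hval j] :
          ∀ j : Fin (N - K + 1), ((toF c j : ℕ).factorial : ℂ) = ((c (j.1+1)).factorial : ℂ)),
        Fin.prod_univ_eq_prod_range (fun j => ((c (j+1)).factorial : ℂ)), ← Icc_prod_eq (N - K + 1) (fun n => ((c n).factorial : ℂ))]
    have hy : (∏ j : Fin (N - K + 1), y (j.1 + 1) ^ (toF c j : ℕ))
        = ∏ n ∈ Icc 1 (N - K + 1), y n ^ c n := by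
      rw [Fintype.prod_congr _ _ (fun j => by rw [hval j] :
          ∀ j : Fin (N - K + 1), y (j.1+1) ^ (toF c j : ℕ) = y (j.1+1) ^ c (j.1+1)),
        Fin.prod_univ_eq_prod_range (fun j => y (j+1) ^ c (j+1)), ← Icc_prod_eq (N - K + 1) (fun n => y n ^ c n)]
    have hspec := Nat.multinomial_spec (Icc 1 (N - K + 1)) c
    rw [hcsum] at hspec
    have hspecC : (∏ n ∈ Icc 1 (N - K + 1), ((c n).factorial : ℂ))
        * (Nat.multinomial (Icc 1 (N - K + 1)) c : ℂ) = (K.factorial : ℂ) := by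
      exact_mod_cast congrArg (Nat.cast : ℕ → ℂ) hspec
    have hfacne : (∏ n ∈ Icc 1 (N - K + 1), ((c n).factorial : ℂ)) ≠ 0 :=
      Finset.prod_ne_zero_iff.mpr (fun n _ => Nat.cast_ne_zero.mpr (c n).factorial_ne_zero)
    have hmult : (Nat.multinomial (Icc 1 (N - K + 1)) c : ℂ)
        = (K.factorial : ℂ) / ∏ n ∈ Icc 1 (N - K + 1), ((c n).factorial : ℂ) := by
      rw [eq_div_iff hfacne, mul_comm]
      exact hspecC
    rw [hfac, hy, hmult]

/-- If `F(t/φ(t)^p) = ∑_{k=1}^m a_k φ(t)^{q_k}` then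
`x_n = ∑_{k=1}^n (∑_{i=1}^m (a_i q_i/(np+q_i)) binom(np+q_i, k)) B_{n,k}(y_1,…,y_{n-k+1})`. -/
theorem stmt3 (m : ℕ) (hm : 1 ≤ m) (p : ℂ) (hp : p ≠ 0) (a q : ℕ → ℂ)
    (hsum : ∑ k ∈ Finset.Icc 1 m, a k = 0)
    (hc1 : ∑ k ∈ Finset.Icc 1 m, a k * q k ≠ 0)
    (hnp : ∀ n : ℕ, 1 ≤ n → ∀ i ∈ Finset.Icc 1 m, (n : ℂ) * p + q i ≠ 0)
    (x y : ℕ → ℂ) (F φ : PowerSeries ℂ)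
    (hF : F = PowerSeries.mk fun n => if n = 0 then 0 else x n)
    (hφ : φ = PowerSeries.mk fun n => if n = 0 then 1 else y n)
    (heq : scomp F (PowerSeries.X * (cpow φ p)⁻¹) =
      ∑ k ∈ Finset.Icc 1 m, a k • cpow φ (q k)) :
    ∀ n : ℕ, 1 ≤ n →
      x n = ∑ k ∈ Finset.Icc 1 n,
        (∑ i ∈ Finset.Icc 1 m,
          a i * q i / ((n : ℂ) * p + q i) * gbinom ((n : ℂ) * p + q i) k) *
          ordBell n k y := by
  have hφc : constantCoeff φ = 1 := by
    rw [hφ, ← coeff_zero_eq_constantCoeff_apply, coeff_mk, if_pos rfl]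
  have hψeq : φ - 1 = PowerSeries.mk fun n => if n = 0 then (0:ℂ) else y n := by
    ext N
    rw [map_sub, hφ, coeff_mk, coeff_mk, PowerSeries.coeff_one]
    by_cases h : N = 0
    · rw [if_pos h, if_pos h, if_pos h, sub_self]
    · rw [if_neg h, if_neg h, if_neg h, sub_zero]
  have heq' : scomp F (PowerSeries.X * cpow φ (-p)) = ∑ k ∈ Icc 1 m, a k • cpow φ (q k) := by
    rw [← cpow_inv_eq (φ := φ) p]
    exact heq
  intro n hn
  obtain ⟨M, rfl⟩ : ∃ M, n = M + 1 := ⟨n - 1, by omega⟩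
  have hrne : ∀ i ∈ Icc 1 m, q i + ((M:ℂ) + 1) * p ≠ 0 := by
    intro i hi
    have := hnp (M+1) (by omega) i hi
    intro hcon
    apply this
    push_cast
    rw [← hcon]
    ring
  have hE : ((M:ℂ) + 1) * coeff (M+1) F
      = ∑ i ∈ Icc 1 m, a i * (q i / (q i + ((M:ℂ)+1)*p)
        * (((M:ℂ)+1) * coeff (M+1) (cpow φ (q i + ((M:ℂ)+1)*p)))) := by
    rw [← extract hφc p F M, heq', D_sum]
    have hstep : (∑ i ∈ Icc 1 m, D (a i • cpow φ (q i))) * cpow φ (((M:ℂ)+1) * p)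
        = ∑ i ∈ Icc 1 m, a i • (D (cpow φ (q i)) * cpow φ (((M:ℂ)+1) * p)) := by
      rw [Finset.sum_mul]
      apply sum_congr rfl
      intro i hi
      rw [D_smul, smul_mul_assoc]
    rw [hstep, map_sum]
    apply sum_congr rfl
    intro i hi
    rw [map_smul, smul_eq_mul, perterm hφc p M (hrne i hi)]
  have hM1 : ((M:ℂ) + 1) ≠ 0 := Nat.cast_add_one_ne_zero M
  have hE3 : ((M:ℂ)+1) * coeff (M+1) F
      = ((M:ℂ)+1) * ∑ i ∈ Icc 1 m, a i * q i / (q i + ((M:ℂ)+1)*p)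
          * coeff (M+1) (cpow φ (q i + ((M:ℂ)+1)*p)) := by
    rw [hE, Finset.mul_sum]
    apply sum_congr rfl
    intro i _
    ring
  have hE4 := mul_left_cancel₀ hM1 hE3
  have hx : coeff (M+1) F = x (M+1) := by rw [hF, coeff_mk, if_neg (by omega)]
  rw [hx] at hE4
  rw [hE4]
  have hexp : ∀ i ∈ Icc 1 m, a i * q i / (q i + ((M:ℂ)+1)*p)
      * coeff (M+1) (cpow φ (q i + ((M:ℂ)+1)*p))
      = ∑ k ∈ range (M+2), a i * q i / (q i + ((M:ℂ)+1)*p)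
          * gbinom (q i + ((M:ℂ)+1)*p) k * coeff (M+1) ((φ - 1)^k) := by
    intro i hi
    rw [coeff_cpow hφc, Finset.mul_sum]
    apply sum_congr rfl
    intro k _
    ring
  rw [sum_congr rfl hexp, Finset.sum_comm]
  have hzero : ∀ k ∈ range (M+2), k = 0 →
      (∑ i ∈ Icc 1 m, a i * q i / (q i + ((M:ℂ)+1)*p)
        * gbinom (q i + ((M:ℂ)+1)*p) k * coeff (M+1) ((φ - 1)^k)) = 0 := by
    intro k _ hk
    subst hk
    apply Finset.sum_eq_zero
    intro i _
    rw [pow_zero, PowerSeries.coeff_one, if_neg (by omega), mul_zero]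
  -- peel off k = 0 and reindex range (M+2) → Icc 1 (M+1)
  rw [Finset.sum_range_succ' (fun k => ∑ i ∈ Icc 1 m, a i * q i / (q i + ((M:ℂ)+1)*p)
        * gbinom (q i + ((M:ℂ)+1)*p) k * coeff (M+1) ((φ - 1)^k)) (M+1)]
  rw [hzero 0 (by simp) rfl, add_zero]
  rw [← Icc_sum_eq (M+1) (fun k => ∑ i ∈ Icc 1 m, a i * q i / (q i + ((M:ℂ)+1)*p)
        * gbinom (q i + ((M:ℂ)+1)*p) k * coeff (M+1) ((φ - 1)^k))]
  apply sum_congr rfl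
  intro k hk
  rw [mem_Icc] at hk
  rw [hψeq, coeff_pow_ordBell y (M+1) k (by omega) (by omega), Finset.sum_mul]
  apply sum_congr rfl
  intro i hi
  have harg : q i + ((M:ℂ)+1)*p = ((M+1:ℕ):ℂ) * p + q i := by push_cast; ring
  rw [harg]
end
end

section
/- Let p \ne 0, q \ne r be complex numbers, and set m = 2 with a_1 = -a_2 = 1/(r-q), q_1 = q, q_2 = r in the \lambda_n(s) setup. Then for all n \ge 1, \lambda_n(s) = (ps/n!) \prod_{k=1}^{n-1} (ps + kq + (n-k)r). -/
open PowerSeries Finset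
noncomputable section

private lemma coeff_pow_zero {f : PowerSeries ℂ} (hf : PowerSeries.constantCoeff f = 0) :
    ∀ {n N : ℕ}, N < n → PowerSeries.coeff N (f ^ n) = 0 := by
  intro n
  induction n with
  | zero => intro N h; omega
  | succ n ih =>
    intro N h
    rw [pow_succ', PowerSeries.coeff_mul]
    apply Finset.sum_eq_zero
    rintro ⟨a, b⟩ hab
    rw [Finset.HasAntidiagonal.mem_antidiagonal] at hab
    rcases Nat.eq_zero_or_pos a with ha | ha
    · subst ha; simp [hf]
    · have hb : b < n := by omega
      rw [ih hb, mul_zero]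

private lemma coeff_mul_pow_zero {f g : PowerSeries ℂ}
    (hf : PowerSeries.constantCoeff f = 0) (hg : PowerSeries.constantCoeff g = 0)
    {k m N : ℕ} (h : N < k + m) : PowerSeries.coeff N (f ^ k * g ^ m) = 0 := by
  rw [PowerSeries.coeff_mul]
  apply Finset.sum_eq_zero
  rintro ⟨a, b⟩ hab
  rw [Finset.HasAntidiagonal.mem_antidiagonal] at hab
  rcases lt_or_ge a k with h1 | h1
  · rw [coeff_pow_zero hf h1, zero_mul]
  · have : b < m := by omega
    rw [coeff_pow_zero hg this, mul_zero]

private lemma coeff_self_pow {F : PowerSeries ℂ} (hF0 : PowerSeries.constantCoeff F = 0) :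
    ∀ n, PowerSeries.coeff n (F ^ n) = (PowerSeries.coeff 1 F) ^ n := by
  intro n
  induction n with
  | zero => simp
  | succ n ih =>
    rw [pow_succ', PowerSeries.coeff_mul, Finset.sum_eq_single (1, n)]
    · rw [ih, pow_succ']
    · rintro ⟨a, b⟩ hab hne
      rw [Finset.HasAntidiagonal.mem_antidiagonal] at hab
      rcases Nat.eq_zero_or_pos a with ha | ha
      · subst ha; simp [hF0]
      · rcases Nat.lt_or_ge a 2 with ha2 | ha2
        · interval_cases a
          · exfalso; apply hne; simp at hab ⊢; omega
        · have hb : b < n := by omega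
          rw [coeff_pow_zero hF0 hb, mul_zero]
    · intro hmem
      exfalso; apply hmem; rw [Finset.HasAntidiagonal.mem_antidiagonal]; omega



private lemma coeff_scomp_exp {f : PowerSeries ℂ} (hf : PowerSeries.constantCoeff f = 0)
    {N M : ℕ} (h : N ≤ M) :
    PowerSeries.coeff N (scomp expS f) =
      ∑ n ∈ Finset.range (M + 1), ((n.factorial : ℂ))⁻¹ * PowerSeries.coeff N (f ^ n) := by
  rw [scomp, PowerSeries.coeff_mk]
  rw [Finset.sum_subset (Finset.range_subset_range.mpr (by omega : N + 1 ≤ M + 1))]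
  · apply Finset.sum_congr rfl
    intro n _
    rw [expS, PowerSeries.coeff_mk, one_div]
  · intro n hn hn'
    rw [Finset.mem_range] at hn hn'
    rw [coeff_pow_zero hf (by omega), mul_zero]

private lemma scomp_exp_zero : scomp expS (0 : PowerSeries ℂ) = 1 := by
  ext N
  rw [scomp, PowerSeries.coeff_mk, Finset.sum_eq_single 0]
  · simp [expS]
  · intro n _ hn
    rw [zero_pow hn, map_zero, mul_zero]
  · intro h; exact absurd (Finset.mem_range.mpr (by omega)) h

private lemma scomp_exp_add {f g : PowerSeries ℂ}
    (hf : PowerSeries.constantCoeff f = 0) (hg : PowerSeries.constantCoeff g = 0) :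
    scomp expS (f + g) = scomp expS f * scomp expS g := by
  ext N
  have key : ∀ k ∈ Finset.range (N + 1),
      ∑ n ∈ Finset.range (N + 1),
        ((n.factorial : ℂ))⁻¹ * (n.choose k : ℂ) * PowerSeries.coeff N (f ^ k * g ^ (n - k))
      = ∑ m ∈ Finset.range (N + 1),
        ((k.factorial : ℂ))⁻¹ * ((m.factorial : ℂ))⁻¹ * PowerSeries.coeff N (f ^ k * g ^ m) := by
    intro k hk
    rw [Finset.mem_range] at hk
    rw [← Finset.sum_subset (show Finset.Ico k (N+1) ⊆ Finset.range (N+1) from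
        fun x hx => by rw [Finset.mem_range]; rw [Finset.mem_Ico] at hx; omega)
      (by intro n hn hn'; rw [Finset.mem_range] at hn
          rw [Finset.mem_Ico] at hn'
          have : n < k := by omega
          rw [Nat.choose_eq_zero_of_lt this, Nat.cast_zero, mul_zero, zero_mul])]
    rw [Finset.sum_Ico_eq_sum_range]
    have hNk : N + 1 - k = (N - k) + 1 := by omega
    rw [← Finset.sum_subset (show Finset.range (N+1-k) ⊆ Finset.range (N+1) from
        Finset.range_subset_range.mpr (by omega))
      (by intro i hi hi'; rw [Finset.mem_range] at hi hi'
          rw [coeff_mul_pow_zero hf hg (by omega : N < k + i), mul_zero])]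
    apply Finset.sum_congr rfl
    intro i _
    have hsub : k + i - k = i := by omega
    rw [hsub]
    congr 1
    have hfact := Nat.add_choose_mul_factorial_mul_factorial k i
    rw [Nat.choose_symm_add]
    have hc : (((k+i).choose i : ℕ) : ℂ) * (k.factorial : ℂ) * (i.factorial : ℂ)
        = ((k+i).factorial : ℂ) := by exact_mod_cast congrArg (fun x : ℕ => (x : ℂ)) hfact
    have h1 : ((k+i).factorial : ℂ) ≠ 0 := Nat.cast_ne_zero.mpr (Nat.factorial_ne_zero _)
    have h2 : (k.factorial : ℂ) ≠ 0 := Nat.cast_ne_zero.mpr (Nat.factorial_ne_zero _)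
    have h3 : (i.factorial : ℂ) ≠ 0 := Nat.cast_ne_zero.mpr (Nat.factorial_ne_zero _)
    field_simp
    linear_combination hc
  have hfg : PowerSeries.constantCoeff (f + g) = 0 := by rw [map_add, hf, hg, add_zero]
  have hexp : ∀ n : ℕ, PowerSeries.coeff N ((f + g) ^ n)
      = ∑ k ∈ Finset.range (n+1), PowerSeries.coeff N (f ^ k * g ^ (n - k)) * (n.choose k : ℂ) := by
    intro n
    rw [add_pow, map_sum]
    apply Finset.sum_congr rfl
    intro k _
    rw [show ((n.choose k : ℕ) : PowerSeries ℂ) = PowerSeries.C ((n.choose k : ℕ) : ℂ) from by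
      simp, PowerSeries.coeff_mul_C]
  calc PowerSeries.coeff N (scomp expS (f + g))
      = ∑ n ∈ Finset.range (N+1), ∑ k ∈ Finset.range (N+1),
          ((n.factorial : ℂ))⁻¹ * (n.choose k : ℂ) * PowerSeries.coeff N (f ^ k * g ^ (n - k)) := by
        rw [coeff_scomp_exp hfg le_rfl]
        apply Finset.sum_congr rfl
        intro n hn
        rw [Finset.mem_range] at hn
        rw [hexp n, Finset.mul_sum]
        rw [Finset.sum_subset (Finset.range_subset_range.mpr (by omega : n + 1 ≤ N + 1))]
        · apply Finset.sum_congr rfl; intro k _; ring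
        · intro k hk hk'
          rw [Finset.mem_range] at hk hk'
          rw [Nat.choose_eq_zero_of_lt (by omega)]
          simp
    _ = ∑ k ∈ Finset.range (N+1), ∑ m ∈ Finset.range (N+1),
          ((k.factorial : ℂ))⁻¹ * ((m.factorial : ℂ))⁻¹ * PowerSeries.coeff N (f ^ k * g ^ m) := by
        rw [Finset.sum_comm]
        exact Finset.sum_congr rfl key
    _ = PowerSeries.coeff N (scomp expS f * scomp expS g) := by
        rw [PowerSeries.coeff_mul]
        have h1 : ∀ ab ∈ Finset.HasAntidiagonal.antidiagonal N,
            PowerSeries.coeff ab.1 (scomp expS f) * PowerSeries.coeff ab.2 (scomp expS g)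
            = ∑ k ∈ Finset.range (N+1), ∑ m ∈ Finset.range (N+1),
                (((k.factorial : ℂ))⁻¹ * PowerSeries.coeff ab.1 (f ^ k)) *
                  (((m.factorial : ℂ))⁻¹ * PowerSeries.coeff ab.2 (g ^ m)) := by
          rintro ⟨a, b⟩ hab
          rw [Finset.HasAntidiagonal.mem_antidiagonal] at hab
          rw [coeff_scomp_exp hf (show a ≤ N by omega), coeff_scomp_exp hg (show b ≤ N by omega),
            Finset.sum_mul_sum]
        symm
        rw [Finset.sum_congr rfl h1, Finset.sum_comm]
        symm
        apply Finset.sum_congr rfl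
        intro k _
        rw [Finset.sum_comm]
        apply Finset.sum_congr rfl
        intro m _
        rw [PowerSeries.coeff_mul, Finset.mul_sum]
        apply Finset.sum_congr rfl
        intro ab _
        ring

private def tfun (p q r : ℂ) : ℕ → ℂ → ℂ := fun n s =>
  if n = 0 then 1 else p * s / (n.factorial : ℂ) *
    ∏ k ∈ Finset.Icc 1 (n - 1), (p * s + (k : ℂ) * q + ((n - k : ℕ) : ℂ) * r)

private lemma tfun_eq (p q r : ℂ) (n : ℕ) (hn : 1 ≤ n) (s : ℂ) :
    tfun p q r n s = p * s / (n.factorial : ℂ) *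
      ∏ i ∈ Finset.range (n - 1), (p * s + ((i : ℂ) + 1) * q + ((n : ℂ) - 1 - (i : ℂ)) * r) := by
  rw [tfun, if_neg (by omega)]
  congr 1
  rw [show Finset.Icc 1 (n - 1) = Finset.Ico 1 n from by
    rw [← Finset.Ico_add_one_right_eq_Icc]; congr 1; omega]
  rw [Finset.prod_Ico_eq_prod_range]
  apply Finset.prod_congr (by congr 1) ?_
  intro i hi
  rw [Finset.mem_range] at hi
  have h1 : ((n - (1 + i) : ℕ) : ℂ) = (n : ℂ) - 1 - (i : ℂ) := by
    have : (1 + i) ≤ n := by omega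
    push_cast [Nat.cast_sub this]
    ring
  rw [h1]
  push_cast
  ring

private lemma tfun_rec (p q r : ℂ) (hp : p ≠ 0) (n : ℕ) (hn : 1 ≤ n) (s : ℂ) :
    tfun p q r n (s + (-q / p)) - tfun p q r n (s + (-r / p)) =
      (r - q) * tfun p q r (n - 1) s := by
  have hpq : p * (s + (-q / p)) = p * s - q := by field_simp; ring
  have hpr : p * (s + (-r / p)) = p * s - r := by field_simp; ring
  set A := p * s with hA
  set h : ℕ → ℂ := fun i => A + (i : ℂ) * q + ((n : ℂ) - 1 - (i : ℂ)) * r with hh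
  have e1 : tfun p q r n (s + (-q / p)) =
      (A - q) / (n.factorial : ℂ) * ∏ i ∈ Finset.range (n - 1), h i := by
    rw [tfun_eq p q r n hn, hpq]
    congr 1
    apply Finset.prod_congr rfl
    intro i _
    simp only [hh]
    ring
  have e2 : tfun p q r n (s + (-r / p)) =
      (A - r) / (n.factorial : ℂ) * ∏ i ∈ Finset.range (n - 1), h (i + 1) := by
    rw [tfun_eq p q r n hn, hpr]
    congr 1
    apply Finset.prod_congr rfl
    intro i _
    simp only [hh]
    push_cast
    ring
  rw [e1, e2]
  rcases Nat.lt_or_ge n 2 with h2 | h2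
  · have : n = 1 := by omega
    subst this
    simp [tfun, hh]
  · -- n ≥ 2
    have e3 : tfun p q r (n - 1) s =
        A / ((n - 1).factorial : ℂ) * ∏ i ∈ Finset.range (n - 2), h (i + 1) := by
      rw [tfun_eq p q r (n - 1) (by omega)]
      have : n - 1 - 1 = n - 2 := by omega
      rw [this]
      congr 1
      apply Finset.prod_congr rfl
      intro i _
      simp only [hh]
      have : ((n - 1 : ℕ) : ℂ) = (n : ℂ) - 1 := by
        push_cast [Nat.cast_sub (show 1 ≤ n by omega)]; ring
      rw [this]
      push_cast
      ring
    rw [e3]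
    -- peel products
    obtain ⟨m, rfl⟩ : ∃ m, n = m + 2 := ⟨n - 2, by omega⟩
    have hm1 : m + 2 - 1 = m + 1 := by omega
    have hm2 : m + 2 - 2 = m := by omega
    rw [hm1, hm2]
    rw [Finset.prod_range_succ'] -- ∏_{range (m+1)} h i = (∏_{range m} h (i+1)) * h 0
    rw [Finset.prod_range_succ] -- ∏_{range (m+1)} h (i+1) = (∏_{range m} h (i+1)) * h (m+1)
    have hfac : ((m + 2).factorial : ℂ) = ((m + 2 : ℕ) : ℂ) * ((m + 1).factorial : ℂ) := by
      rw [show (m + 2) = (m + 1) + 1 from rfl, Nat.factorial_succ]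
      push_cast
      ring
    have hf1 : ((m + 1).factorial : ℂ) ≠ 0 := Nat.cast_ne_zero.mpr (Nat.factorial_ne_zero _)
    have hn0 : ((m : ℂ) + 2) ≠ 0 := by
      have : ((m : ℂ) + 2) = ((m + 2 : ℕ) : ℂ) := by push_cast; ring
      rw [this]
      exact Nat.cast_ne_zero.mpr (by omega)
    have h0v : h 0 = A + ((m + 2 : ℂ) - 1) * r := by simp only [hh]; push_cast; ring
    have hmv : h (m + 1) = A + ((m + 2 : ℂ) - 1) * q := by simp only [hh]; push_cast; ring
    rw [hfac, h0v, hmv]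
    have hm1' : ((m + 2 - 1 : ℕ) : ℂ) = (m + 2 : ℂ) - 1 := by push_cast; ring
    field_simp [hf1, hn0]
    push_cast
    ring


private lemma tfun_poly (p q r : ℂ) (n : ℕ) :
    ∃ P : Polynomial ℂ, ∀ s, tfun p q r n s = P.eval s := by
  cases n with
  | zero => exact ⟨1, fun s => by simp [tfun]⟩
  | succ m =>
    refine ⟨Polynomial.C (p / ((m + 1).factorial : ℂ)) * Polynomial.X *
      ∏ k ∈ Finset.Icc 1 m, (Polynomial.C p * Polynomial.X +
        Polynomial.C ((k : ℂ) * q + ((m + 1 - k : ℕ) : ℂ) * r)), fun s => ?_⟩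
    rw [tfun, if_neg (by omega)]
    simp only [Polynomial.eval_mul, Polynomial.eval_C, Polynomial.eval_X,
      Polynomial.eval_prod, Polynomial.eval_add]
    have h1 : m + 1 - 1 = m := by omega
    rw [h1]
    have hprod : ∏ k ∈ Finset.Icc 1 m, (p * s + (k : ℂ) * q + ((m + 1 - k : ℕ) : ℂ) * r)
        = ∏ k ∈ Finset.Icc 1 m, (p * s + ((k : ℂ) * q + ((m + 1 - k : ℕ) : ℂ) * r)) :=
      Finset.prod_congr rfl (fun k _ => by ring)
    rw [hprod]
    ring

private lemma tfun_zero (p q r : ℂ) (n : ℕ) (hn : 1 ≤ n) : tfun p q r n 0 = 0 := by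
  rw [tfun, if_neg (by omega), mul_zero, zero_div, zero_mul]

private lemma poly_zero_of_periodic {P : Polynomial ℂ} {c : ℂ} (hc : c ≠ 0)
    (hper : ∀ x, P.eval (x + c) = P.eval x) (h0 : P.eval 0 = 0) : P = 0 := by
  apply Polynomial.eq_zero_of_infinite_isRoot
  have hk : ∀ k : ℕ, P.eval ((k : ℂ) * c) = 0 := by
    intro k
    induction k with
    | zero => simpa using h0
    | succ k ih =>
      have h1 : ((k + 1 : ℕ) : ℂ) * c = (k : ℂ) * c + c := by push_cast; ring
      rw [h1, hper, ih]
  apply Set.infinite_of_injective_forall_mem (f := fun k : ℕ => (k : ℂ) * c)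
  · intro a b hab
    simp only at hab
    have := mul_right_cancel₀ hc hab
    exact_mod_cast this
  · intro k
    exact hk k

private lemma expansion_unique {F : PowerSeries ℂ} (hF0 : PowerSeries.constantCoeff F = 0)
    (hF1 : PowerSeries.coeff 1 F ≠ 0) {μ ν : ℕ → ℂ}
    (h : ∀ N, ∑ n ∈ Finset.range (N + 1), μ n * PowerSeries.coeff N (F ^ n)
        = ∑ n ∈ Finset.range (N + 1), ν n * PowerSeries.coeff N (F ^ n)) :
    ∀ n, μ n = ν n := by
  intro n
  induction n using Nat.strong_induction_on with
  | _ n ih =>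
    have hN := h n
    rw [Finset.sum_range_succ, Finset.sum_range_succ] at hN
    have heq : ∑ k ∈ Finset.range n, μ k * PowerSeries.coeff n (F ^ k)
        = ∑ k ∈ Finset.range n, ν k * PowerSeries.coeff n (F ^ k) :=
      Finset.sum_congr rfl (fun k hk => by rw [ih k (Finset.mem_range.mp hk)])
    have htop : μ n * PowerSeries.coeff n (F ^ n) = ν n * PowerSeries.coeff n (F ^ n) := by
      rw [heq] at hN; exact add_left_cancel hN
    have hcn : PowerSeries.coeff n (F ^ n) ≠ 0 := by
      rw [coeff_self_pow hF0]; exact pow_ne_zero _ hF1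
    exact mul_right_cancel₀ hcn htop

/-- In the case `m = 2`, `a₁ = -a₂ = 1/(r-q)`, `q₁ = q`, `q₂ = r`,
the coefficients `λ_n(s)` have the closed form
`λ_n(s) = (ps/n!) ∏_{k=1}^{n-1} (ps + kq + (n-k)r)`. -/
theorem stmt11 (p q r : ℂ) (hp : p ≠ 0) (hqr : q ≠ r)
    (w F : PowerSeries ℂ) (hw : PowerSeries.constantCoeff w = 1)
    (hF : F = (1 / (r - q)) • (cpow w (-q / p) - cpow w (-r / p)))
    (hF0 : PowerSeries.constantCoeff F = 0) (hF1 : PowerSeries.coeff 1 F ≠ 0)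
    (lam : ℕ → ℂ → ℂ) (hlam0 : ∀ s : ℂ, lam 0 s = 1)
    (hlam : ∀ (s : ℂ) (N : ℕ), PowerSeries.coeff N (cpow w s) =
      ∑ n ∈ Finset.range (N + 1), lam n s * PowerSeries.coeff N (F ^ n)) :
    ∀ (s : ℂ) (n : ℕ), 1 ≤ n →
      lam n s = p * s / (n.factorial : ℂ) *
        ∏ k ∈ Finset.Icc 1 (n - 1), (p * s + (k : ℂ) * q + ((n - k : ℕ) : ℂ) * r) := by
  have hrq : r - q ≠ 0 := sub_ne_zero.mpr (Ne.symm hqr)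
  have constL : PowerSeries.constantCoeff (scomp logS (w - 1)) = 0 := by
    rw [scomp, PowerSeries.constantCoeff_mk]
    simp [logS]
  have hconst_smul : ∀ a : ℂ, PowerSeries.constantCoeff (a • scomp logS (w - 1)) = 0 := by
    intro a
    rw [PowerSeries.constantCoeff_smul, constL, smul_zero]
  have hEadd : ∀ a b : ℂ, cpow w (a + b) = cpow w a * cpow w b := by
    intro a b
    rw [cpow, cpow, cpow, add_smul]
    exact scomp_exp_add (hconst_smul a) (hconst_smul b)
  have hE0 : cpow w 0 = 1 := by
    rw [cpow, zero_smul]; exact scomp_exp_zero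
  -- key identity
  have hK : ∀ s : ℂ, cpow w (s + (-q / p)) - cpow w (s + (-r / p)) = (r - q) • (F * cpow w s) := by
    intro s
    rw [hEadd, hEadd]
    have hFd : cpow w (-q / p) - cpow w (-r / p) = (r - q) • F := by
      rw [hF, smul_smul, mul_one_div, div_self hrq, one_smul]
    calc cpow w s * cpow w (-q / p) - cpow w s * cpow w (-r / p)
        = cpow w s * (cpow w (-q / p) - cpow w (-r / p)) := by ring
      _ = cpow w s * ((r - q) • F) := by rw [hFd]
      _ = (r - q) • (F * cpow w s) := by
          rw [mul_comm, smul_mul_assoc]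
  -- coefficients of F * cpow w s
  have hFE : ∀ (s : ℂ) (N : ℕ), PowerSeries.coeff N (F * cpow w s)
      = ∑ n ∈ Finset.range (N + 1), lam n s * PowerSeries.coeff N (F ^ (n + 1)) := by
    intro s N
    rw [PowerSeries.coeff_mul]
    have h1 : ∀ ab ∈ Finset.HasAntidiagonal.antidiagonal N,
        PowerSeries.coeff ab.1 F * PowerSeries.coeff ab.2 (cpow w s)
        = ∑ n ∈ Finset.range (N + 1),
            lam n s * (PowerSeries.coeff ab.1 F * PowerSeries.coeff ab.2 (F ^ n)) := by
      rintro ⟨a, b⟩ hab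
      rw [Finset.HasAntidiagonal.mem_antidiagonal] at hab
      simp only
      rw [hlam s b, Finset.mul_sum]
      rw [Finset.sum_subset (Finset.range_subset_range.mpr (by omega : b + 1 ≤ N + 1))]
      · apply Finset.sum_congr rfl; intro n _; ring
      · intro n hn hn'
        rw [Finset.mem_range] at hn hn'
        rw [coeff_pow_zero hF0 (by omega : b < n), mul_zero, mul_zero]
    rw [Finset.sum_congr rfl h1, Finset.sum_comm]
    apply Finset.sum_congr rfl
    intro n _
    rw [← Finset.mul_sum]
    congr 1
    rw [pow_succ', PowerSeries.coeff_mul]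
  -- the recurrence for lam
  have hlamrec : ∀ (s : ℂ) (n : ℕ),
      lam n (s + (-q / p)) - lam n (s + (-r / p))
        = (if n = 0 then 0 else (r - q) * lam (n - 1) s) := by
    intro s n
    refine expansion_unique hF0 hF1
      (μ := fun n => lam n (s + (-q / p)) - lam n (s + (-r / p)))
      (ν := fun n => if n = 0 then 0 else (r - q) * lam (n - 1) s) ?_ n
    intro N
    have hL : ∑ n ∈ Finset.range (N + 1),
        (lam n (s + (-q / p)) - lam n (s + (-r / p))) * PowerSeries.coeff N (F ^ n)
        = PowerSeries.coeff N (cpow w (s + (-q / p))) -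
          PowerSeries.coeff N (cpow w (s + (-r / p))) := by
      rw [hlam, hlam, ← Finset.sum_sub_distrib]
      apply Finset.sum_congr rfl
      intro n _
      ring
    rw [hL, ← map_sub, hK s, PowerSeries.coeff_smul, smul_eq_mul, hFE]
    rw [Finset.mul_sum]
    rw [Finset.sum_range_succ' (fun n => (if n = 0 then 0 else (r - q) * lam (n - 1) s) *
      PowerSeries.coeff N (F ^ n)) N]
    simp only [if_neg (Nat.succ_ne_zero _), Nat.add_sub_cancel, if_pos rfl, zero_mul, add_zero]
    rw [Finset.sum_range_succ]
    rw [coeff_pow_zero hF0 (by omega : N < N + 1), mul_zero, mul_zero, add_zero]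
    simp only [if_true, zero_mul, add_zero]
    apply Finset.sum_congr rfl
    intro n _
    ring
  -- lam at 0
  have hlamz : ∀ n : ℕ, lam n 0 = (if n = 0 then 1 else 0) := by
    refine expansion_unique hF0 hF1 ?_
    intro N
    rw [← hlam 0 N, hE0]
    rw [Finset.sum_congr rfl (fun n _ => by
      rw [ite_mul, one_mul, zero_mul] :
      ∀ n ∈ Finset.range (N + 1), (if n = 0 then 1 else 0) * PowerSeries.coeff N (F ^ n)
        = if n = 0 then PowerSeries.coeff N (F ^ n) else 0)]
    rw [Finset.sum_ite_eq' (Finset.range (N + 1)) 0 (fun n => PowerSeries.coeff N (F ^ n))]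
    rw [if_pos (Finset.mem_range.mpr (by omega))]
    rw [pow_zero]
  -- coeff N (cpow w s) is polynomial in s
  have hEcoeff : ∀ N : ℕ, ∃ P : Polynomial ℂ, ∀ s : ℂ, PowerSeries.coeff N (cpow w s) = P.eval s := by
    intro N
    refine ⟨∑ n ∈ Finset.range (N + 1),
      Polynomial.C (((n.factorial : ℂ))⁻¹ * PowerSeries.coeff N ((scomp logS (w - 1)) ^ n)) *
        Polynomial.X ^ n, fun s => ?_⟩
    rw [cpow, coeff_scomp_exp (hconst_smul s) le_rfl, Polynomial.eval_finset_sum]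
    apply Finset.sum_congr rfl
    intro n _
    rw [smul_pow, PowerSeries.coeff_smul, smul_eq_mul]
    rw [Polynomial.eval_mul, Polynomial.eval_C, Polynomial.eval_pow, Polynomial.eval_X]
    ring
  -- lam n is polynomial in s
  have hlampoly : ∀ n : ℕ, ∃ P : Polynomial ℂ, ∀ s : ℂ, lam n s = P.eval s := by
    intro n
    induction n using Nat.strong_induction_on with
    | _ n ih =>
      choose Pk hPk using ih
      obtain ⟨Q, hQ⟩ := hEcoeff n
      have hcn : PowerSeries.coeff n (F ^ n) = (PowerSeries.coeff 1 F) ^ n :=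
        coeff_self_pow hF0 n
      refine ⟨(Q - ∑ k ∈ (Finset.range n).attach,
        Pk k.1 (Finset.mem_range.mp k.2) * Polynomial.C (PowerSeries.coeff n (F ^ k.1))) *
        Polynomial.C (((PowerSeries.coeff 1 F) ^ n)⁻¹), fun s => ?_⟩
      have hkey : lam n s * (PowerSeries.coeff 1 F) ^ n
          = PowerSeries.coeff n (cpow w s)
            - ∑ k ∈ Finset.range n, lam k s * PowerSeries.coeff n (F ^ k) := by
        rw [hlam s n, Finset.sum_range_succ, hcn]
        ring
      have hpow : ((PowerSeries.coeff 1 F) ^ n) ≠ 0 := pow_ne_zero _ hF1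
      rw [Polynomial.eval_mul, Polynomial.eval_C, Polynomial.eval_sub, Polynomial.eval_finset_sum]
      have hsum : ∑ k ∈ (Finset.range n).attach,
          Polynomial.eval s (Pk k.1 (Finset.mem_range.mp k.2) *
            Polynomial.C (PowerSeries.coeff n (F ^ k.1)))
          = ∑ k ∈ Finset.range n, lam k s * PowerSeries.coeff n (F ^ k) := by
        rw [← Finset.sum_attach (Finset.range n)
          (fun k => lam k s * PowerSeries.coeff n (F ^ k))]
        apply Finset.sum_congr rfl
        intro k _
        rw [Polynomial.eval_mul, Polynomial.eval_C, hPk k.1 (Finset.mem_range.mp k.2)]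
      rw [hsum, ← hQ s, ← hkey]
      field_simp
  -- main induction
  suffices hmain : ∀ n : ℕ, ∀ s : ℂ, lam n s = tfun p q r n s by
    intro s n hn
    have := hmain n s
    rwa [tfun, if_neg (by omega)] at this
  intro n
  induction n using Nat.strong_induction_on with
  | _ n ih =>
    intro s
    rcases Nat.eq_zero_or_pos n with rfl | hn1
    · rw [hlam0 s]; simp [tfun]
    · obtain ⟨Pl, hPl⟩ := hlampoly n
      obtain ⟨Pt, hPt⟩ := tfun_poly p q r n
      have hprev : ∀ x : ℂ, lam (n - 1) x = tfun p q r (n - 1) x := by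
        intro x
        exact ih (n - 1) (by omega) x
      have hd : ∀ x : ℂ, (Pl - Pt).eval (x + (q - r) / p) = (Pl - Pt).eval x := by
        intro x
        have h1 := hlamrec (x + q / p) n
        rw [if_neg (by omega)] at h1
        have h2 := tfun_rec p q r hp n hn1 (x + q / p)
        rw [hprev] at h1
        have e1 : x + q / p + (-q / p) = x := by field_simp; ring
        have e2 : x + q / p + (-r / p) = x + (q - r) / p := by field_simp; ring
        rw [e1, e2] at h1 h2
        have h12 : lam n (x + (q - r) / p) - tfun p q r n (x + (q - r) / p)
            = lam n x - tfun p q r n x := by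
          linear_combination h2 - h1
        rw [Polynomial.eval_sub, Polynomial.eval_sub]
        simp only [← hPl, ← hPt]
        linear_combination h12
      have hc0 : ((q - r) / p) ≠ 0 := div_ne_zero (sub_ne_zero.mpr hqr) hp
      have hd0 : (Pl - Pt).eval 0 = 0 := by
        rw [Polynomial.eval_sub]
        simp only [← hPl, ← hPt]
        rw [hlamz n, if_neg (by omega), tfun_zero p q r n hn1, sub_zero]
      have hdz : Pl - Pt = 0 := poly_zero_of_periodic hc0 hd hd0
      have hev : Pl.eval s = Pt.eval s := by
        have h := congrArg (Polynomial.eval s) hdz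
        rw [Polynomial.eval_sub, Polynomial.eval_zero] at h
        exact sub_eq_zero.mp h
      rw [hPl s, hPt s, hev]
end
end
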